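/- Let X and Y be Banach spaces over 𝕜 (𝕜 = ℝ or ℂ), let M ⊆ X and N ⊆ Y be linear submanifolds, and suppose there exist bounded linear operators T : X → X and S : Y → Y such that the kernel of T is a complemented subspace of X, the kernel of S is a complemented subspace of Y, the closure M⁻ of M equals ker(T), and the closure N⁻ of N equals ker(S). Then every bounded bilinear map φ : M × N → Z into an arbitrary Banach space Z admits a bounded bilinear extension φ̂ : X × Y → Z over X × Y. -/

import Mathlib

open ContinuousLinearMap

/-- The inclusion of a submodule into a larger submodule, as a continuous linear map. -/
noncomputable def incCLM {𝕜 X : Type*} [RCLike 𝕜] [NormedAddCommGroup X] [NormedSpace 𝕜 X]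
    {M K : Submodule 𝕜 X} (h : M ≤ K) : M →L[𝕜] K :=
  LinearIsometry.toContinuousLinearMap ⟨Submodule.inclusion h, fun _ => rfl⟩

lemma incCLM_isometry {𝕜 X : Type*} [RCLike 𝕜] [NormedAddCommGroup X] [NormedSpace 𝕜 X]
    {M K : Submodule 𝕜 X} (h : M ≤ K) : Isometry (incCLM h) :=
  Isometry.of_dist_eq fun a b => by simp [incCLM, Subtype.dist_eq]

lemma incCLM_denseRange {𝕜 X : Type*} [RCLike 𝕜] [NormedAddCommGroup X] [NormedSpace 𝕜 X]
    {M K : Submodule 𝕜 X} (h : M ≤ K) (hMK : M.topologicalClosure = K) :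
    DenseRange (incCLM (𝕜 := 𝕜) h) := by
  intro x
  have hx : (x : X) ∈ closure (M : Set X) := by
    have : (x : X) ∈ (M.topologicalClosure : Set X) := by rw [hMK]; exact x.2
    simpa [Submodule.topologicalClosure_coe] using this
  rw [mem_closure_iff_seq_limit] at hx
  obtain ⟨u, hu, hlim⟩ := hx
  rw [mem_closure_iff_seq_limit]
  refine ⟨fun n => incCLM h ⟨u n, hu n⟩, fun n => ⟨_, rfl⟩, ?_⟩
  rw [Metric.tendsto_atTop] at hlim ⊢
  intro ε hε
  obtain ⟨n₀, hn₀⟩ := hlim ε hε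
  exact ⟨n₀, fun n hn => (by simpa [incCLM, Subtype.dist_eq] using hn₀ n hn : dist (u n) (x : X) < ε)⟩

/-- Every continuous linear map on a submodule extends to a continuous linear map on a
complete submodule in which it is dense. -/
lemma exists_extension {𝕜 X W : Type*} [RCLike 𝕜]
    [NormedAddCommGroup X] [NormedSpace 𝕜 X]
    [NormedAddCommGroup W] [NormedSpace 𝕜 W] [CompleteSpace W]
    {M K : Submodule 𝕜 X} (h : M ≤ K) (hMK : M.topologicalClosure = K)
    (φ : M →L[𝕜] W) :
    ∃ ψ : K →L[𝕜] W, ∀ m : M, ψ ⟨(m : X), h m.2⟩ = φ m := by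
  refine ⟨ContinuousLinearMap.extend (F := W) (σ₁₂ := RingHom.id 𝕜) φ (incCLM h), fun m => ?_⟩
  exact ContinuousLinearMap.extend_eq (F := W) (σ₁₂ := RingHom.id 𝕜) φ
    (incCLM_denseRange h hMK) (incCLM_isometry h).isUniformInducing m

/-- If `M⁻ = ker T` and `N⁻ = ker S` for bounded operators `T`, `S` whose kernels are
complemented subspaces, then every bounded bilinear map `φ : M × N → Z` into an arbitrary
Banach space `Z` has a bounded bilinear extension over `X × Y`. -/
theorem stmt_7 {𝕜 : Type*} [RCLike 𝕜]
    {X Y Z : Type*}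
    [NormedAddCommGroup X] [NormedSpace 𝕜 X] [CompleteSpace X]
    [NormedAddCommGroup Y] [NormedSpace 𝕜 Y] [CompleteSpace Y]
    [NormedAddCommGroup Z] [NormedSpace 𝕜 Z] [CompleteSpace Z]
    (M : Submodule 𝕜 X) (N : Submodule 𝕜 Y)
    (T : X →L[𝕜] X) (S : Y →L[𝕜] Y)
    (hT : (LinearMap.ker (T : X →ₗ[𝕜] X)).ClosedComplemented)
    (hS : (LinearMap.ker (S : Y →ₗ[𝕜] Y)).ClosedComplemented)
    (hMT : M.topologicalClosure = LinearMap.ker (T : X →ₗ[𝕜] X))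
    (hNS : N.topologicalClosure = LinearMap.ker (S : Y →ₗ[𝕜] Y))
    (φ : M →L[𝕜] N →L[𝕜] Z) :
    ∃ φhat : X →L[𝕜] Y →L[𝕜] Z,
      ∀ (u : M) (v : N), φhat (u : X) (v : Y) = φ u v := by
  set K : Submodule 𝕜 X := LinearMap.ker (T : X →ₗ[𝕜] X) with hK
  set L : Submodule 𝕜 Y := LinearMap.ker (S : Y →ₗ[𝕜] Y) with hL
  have hKc : IsClosed (K : Set X) := ContinuousLinearMap.isClosed_ker T
  have hLc : IsClosed (L : Set Y) := ContinuousLinearMap.isClosed_ker S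
  haveI : CompleteSpace K := hKc.completeSpace_coe
  haveI : CompleteSpace L := hLc.completeSpace_coe
  have hMK : M ≤ K := hMT ▸ M.le_topologicalClosure
  have hNL : N ≤ L := hNS ▸ N.le_topologicalClosure
  obtain ⟨f1, hf1⟩ := exists_extension (W := N →L[𝕜] Z) hMK hMT φ
  obtain ⟨g, hg⟩ := exists_extension (W := K →L[𝕜] Z) hNL hNS f1.flip
  obtain ⟨PT, hPT⟩ := hT
  obtain ⟨PS, hPS⟩ := hS
  refine ⟨((compL 𝕜 Y L Z).flip PS).comp (g.flip.comp PT), fun u v => ?_⟩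
  have h1 : PT (u : X) = ⟨(u : X), hMK u.2⟩ := hPT ⟨(u : X), hMK u.2⟩
  have h2 : PS (v : Y) = ⟨(v : Y), hNL v.2⟩ := hPS ⟨(v : Y), hNL v.2⟩
  have h3 := hg v
  have h4 := hf1 u
  simp only [comp_apply, flip_apply, compL_apply, h1, h2, h3, h4]
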